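/- Let X = {x₁,...,x_m} be a unit-norm tight frame for R^n with coherence α, and suppose there is x ∈ X with |⟨x,y⟩| = α for every y ∈ X \ {x}. Then α = √((m-n)/(n(m-1))), i.e., α equals the Welch bound, and hence X is an equiangular tight frame. -/
import Mathlib

open scoped RealInnerProductSpace
abbrev E (n : ℕ) := EuclideanSpace ℝ (Fin n)
noncomputable def cohF {n m : ℕ} (x : Fin m → E n) : ℝ :=
  sSup {r : ℝ | ∃ i j : Fin m, i ≠ j ∧ r = |⟪x i, x j⟫|}

theorem welch_equality_of_full_neighbors {n m : ℕ} (hn : 0 < n) (hm : 1 < m)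
    (x : Fin m → E n) (hunit : ∀ i, ‖x i‖ = 1)
    (htight : ∀ v : E n, ∑ i, ⟪x i, v⟫ • x i = ((m : ℝ) / n) • v)
    (α : ℝ) (hα : cohF x = α)
    (hfull : ∃ i : Fin m, ∀ j : Fin m, j ≠ i → |⟪x i, x j⟫| = α) :
    α = Real.sqrt (((m : ℝ) - n) / (n * ((m : ℝ) - 1))) ∧
    ∀ i j : Fin m, i ≠ j → |⟪x i, x j⟫| = α := by
  have hn' : (0:ℝ) < n := by exact_mod_cast hn
  have hm1 : (0:ℝ) < (m:ℝ) - 1 := by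
    have : (1:ℝ) < m := by exact_mod_cast hm
    linarith
  -- key identity
  have key : ∀ i : Fin m, ∑ j, ⟪x i, x j⟫^2 = (m:ℝ)/n := by
    intro i
    have h := congrArg (fun v => ⟪v, x i⟫) (htight (x i))
    simp only [sum_inner, real_inner_smul_left, real_inner_smul_left] at h
    have hself : ⟪x i, x i⟫ = 1 := by
      rw [real_inner_self_eq_norm_sq, hunit i]; norm_num
    rw [hself, mul_one] at h
    calc ∑ j, ⟪x i, x j⟫^2 = ∑ j, ⟪x j, x i⟫ * ⟪x j, x i⟫ := by
          refine Finset.sum_congr rfl fun j _ => ?_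
          rw [real_inner_comm]; ring
      _ = (m:ℝ)/n := h
  have hc : ((m - 1 : ℕ) : ℝ) = (m:ℝ) - 1 := by
    have : 1 ≤ m := hm.le
    push_cast [this]; ring
  have key2 : ∀ i : Fin m, ∑ j ∈ Finset.univ.erase i, ⟪x i, x j⟫^2 = (m:ℝ)/n - 1 := by
    intro i
    have hself : ⟪x i, x i⟫ = 1 := by
      rw [real_inner_self_eq_norm_sq, hunit i]; norm_num
    have h2 : ⟪x i, x i⟫^2 + ∑ j ∈ Finset.univ.erase i, ⟪x i, x j⟫^2 = (m:ℝ)/n := by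
      rw [← key i]
      exact Finset.add_sum_erase Finset.univ (fun j => ⟪x i, x j⟫^2) (Finset.mem_univ i)
    rw [hself] at h2
    nlinarith [h2]
  obtain ⟨i0, hi0⟩ := hfull
  -- α ≥ 0
  obtain ⟨j0, hj0⟩ : ∃ j : Fin m, j ≠ i0 := by
    obtain ⟨j, hj⟩ := Fintype.exists_ne_of_one_lt_card (by simpa using hm) i0
    exact ⟨j, hj⟩
  have hα0 : 0 ≤ α := by rw [← hi0 j0 hj0]; exact abs_nonneg _
  -- the sum for i0 gives (m-1) α² = m/n - 1
  have hcard : (Finset.univ.erase i0).card = m - 1 := by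
    simp [Finset.card_erase_of_mem]
  have hsum : ((m:ℝ) - 1) * α^2 = (m:ℝ)/n - 1 := by
    have h3 : ∑ j ∈ Finset.univ.erase i0, ⟪x i0, x j⟫^2
        = ∑ _j ∈ Finset.univ.erase i0, α^2 :=
      Finset.sum_congr rfl fun j hj => by
        rw [← sq_abs, hi0 j (Finset.ne_of_mem_erase hj)]
    have := key2 i0
    rw [h3, Finset.sum_const, hcard, nsmul_eq_mul, hc] at this
    exact this
  have hα2 : α^2 = ((m:ℝ) - n) / (n * ((m:ℝ) - 1)) := by
    field_simp at hsum ⊢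
    nlinarith [hsum]
  constructor
  · rw [← hα2, Real.sqrt_sq hα0]
  · -- bound from sSup
    intro i j hij
    have hbdd : BddAbove {r : ℝ | ∃ i j : Fin m, i ≠ j ∧ r = |⟪x i, x j⟫|} := by
      apply Set.Finite.bddAbove
      apply Set.Finite.subset (Set.finite_range (fun p : Fin m × Fin m => |⟪x p.1, x p.2⟫|))
      rintro r ⟨a, b, _, rfl⟩; exact ⟨(a, b), rfl⟩
    have hle : ∀ a b : Fin m, a ≠ b → |⟪x a, x b⟫| ≤ α := by
      intro a b hab
      rw [← hα]
      exact le_csSup hbdd ⟨a, b, hab, rfl⟩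
    have hterm : ∀ a b : Fin m, a ≠ b → ⟪x a, x b⟫^2 ≤ α^2 := by
      intro a b hab
      rw [← sq_abs]
      exact pow_le_pow_left₀ (abs_nonneg _) (hle a b hab) 2
    -- sum of (α² - term) over erase i is 0
    have hzero : ∑ k ∈ Finset.univ.erase i, (α^2 - ⟪x i, x k⟫^2) = 0 := by
      rw [Finset.sum_sub_distrib, key2 i, Finset.sum_const,
        Finset.card_erase_of_mem (Finset.mem_univ i), Finset.card_univ,
        Fintype.card_fin, nsmul_eq_mul, hc]
      linarith
    have heach := (Finset.sum_eq_zero_iff_of_nonneg (fun k hk => by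
      have := hterm i k (Finset.ne_of_mem_erase hk).symm
      -- need i ≠ k
      linarith)).mp hzero
    have hj' : j ∈ Finset.univ.erase i := Finset.mem_erase.mpr ⟨hij.symm, Finset.mem_univ j⟩
    have := heach j hj'
    have h2 : ⟪x i, x j⟫^2 = α^2 := by linarith
    have : |⟪x i, x j⟫| = |α| := by
      rw [← Real.sqrt_sq_eq_abs, ← Real.sqrt_sq_eq_abs, h2]
    rw [this, abs_of_nonneg hα0]
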